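/- The set N × ℂ^n, where N is the set of nilpotent n×n complex matrices, is a finite union of orbits for the diagonal action of GL_n(ℂ) given by g·(X, v) = (gXg^{-1}, gv). -/

import Mathlib

open Matrix

namespace Stmt4Aux

open Polynomial Module

noncomputable section

abbrev Rp : Type := Polynomial ℂ

/-- Equivalence of pairs (endomorphism, vector) across complex vector spaces. -/
def PEq {M N : Type} [AddCommGroup M] [Module ℂ M] [AddCommGroup N] [Module ℂ N]
    (f : M →ₗ[ℂ] M) (v : M) (g : N →ₗ[ℂ] N) (w : N) : Prop :=
  ∃ e : M ≃ₗ[ℂ] N, (∀ x, e (f x) = g (e x)) ∧ e v = w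

lemma PEq.trans {M N P : Type} [AddCommGroup M] [Module ℂ M] [AddCommGroup N] [Module ℂ N]
    [AddCommGroup P] [Module ℂ P] {f : M →ₗ[ℂ] M} {v : M} {g : N →ₗ[ℂ] N} {w : N}
    {h : P →ₗ[ℂ] P} {u : P} (h₁ : PEq f v g w) (h₂ : PEq g w h u) : PEq f v h u := by
  obtain ⟨e₁, he₁, hv₁⟩ := h₁
  obtain ⟨e₂, he₂, hv₂⟩ := h₂
  exact ⟨e₁.trans e₂, fun x => by simp [he₁, he₂], by simp [hv₁, hv₂]⟩

/-- The action of `X` as a `ℂ`-linear endomorphism of an `ℂ[X]`-module. -/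
def tEnd (P : Type) [AddCommGroup P] [Module ℂ P] [Module Rp P] [IsScalarTower ℂ Rp P] :
    P →ₗ[ℂ] P where
  toFun x := (X : Rp) • x
  map_add' := smul_add _
  map_smul' c x := smul_comm (X : Rp) c x

lemma pEq_of_linearEquiv {P Q : Type} [AddCommGroup P] [Module ℂ P] [Module Rp P]
    [IsScalarTower ℂ Rp P] [AddCommGroup Q] [Module ℂ Q] [Module Rp Q] [IsScalarTower ℂ Rp Q]
    (e : P ≃ₗ[Rp] Q) (v : P) : PEq (tEnd P) v (tEnd Q) (e v) :=
  ⟨e.restrictScalars ℂ, fun x => map_smul e (X : Rp) x, rfl⟩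

/-- Model cyclic module `ℂ[X]/(X^a)`. -/
abbrev Qmod (a : ℕ) : Type := Rp ⧸ Ideal.span {((X : Rp) ^ a)}

/-- Model space: product of cyclic modules. -/
abbrev ModelSp (k : ℕ) (E : Fin k → ℕ) : Type := ∀ j, Qmod (E j)

/-- Normalized element of `Qmod a` : either `0` or the class of `X^b`. -/
def qOf (a : ℕ) (bo : Option ℕ) : Qmod a :=
  bo.elim 0 fun b => Submodule.Quotient.mk ((X : Rp) ^ b)

def modelVec (k : ℕ) (E : Fin k → ℕ) (B : Fin k → Option ℕ) : ModelSp k E :=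
  fun j => qOf (E j) (B j)

/-- multiplication by a unit as an `Rp`-linear equivalence -/
def unitMul {a : ℕ} (u : (Qmod a)ˣ) : Qmod a ≃ₗ[Rp] Qmod a :=
  LinearEquiv.ofLinear (LinearMap.mulLeft Rp (u : Qmod a))
    (LinearMap.mulLeft Rp ((u⁻¹ : (Qmod a)ˣ) : Qmod a))
    (LinearMap.ext fun x => by simp)
    (LinearMap.ext fun x => by simp)

lemma exists_unit_norm (a : ℕ) (q : Qmod a) :
    ∃ (u : (Qmod a)ˣ) (bo : Option ℕ), (∀ b ∈ bo, b < a) ∧ (u : Qmod a) * q = qOf a bo := by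
  by_cases hq : q = 0
  · exact ⟨1, none, by simp, by simp [hq, qOf]⟩
  · obtain ⟨f, rfl⟩ := Submodule.Quotient.mk_surjective _ q
    have hf0 : f ≠ 0 := by
      rintro rfl
      exact hq (by simp)
    have hndvd : ¬ ((X : Rp) ^ a ∣ f) := by
      intro hdvd
      exact hq ((Submodule.Quotient.mk_eq_zero _).mpr (Ideal.mem_span_singleton.mpr hdvd))
    obtain ⟨g, hfg, hg⟩ := f.exists_eq_pow_rootMultiplicity_mul_and_not_dvd hf0 0
    rw [Polynomial.C_0, sub_zero] at hfg hg
    set b := f.rootMultiplicity 0 with hb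
    have hba : b < a := by
      by_contra hba
      push_neg at hba
      exact hndvd (hfg ▸ (Dvd.dvd.mul_right (pow_dvd_pow _ hba) g))
    have hcop : IsCoprime ((X : Rp) ^ a) g :=
      (Polynomial.irreducible_X.coprime_iff_not_dvd.mpr hg).pow_left
    obtain ⟨s, t, hst⟩ := hcop
    set mk := Ideal.Quotient.mk (Ideal.span {((X : Rp) ^ a)}) with hmk
    have hX0 : (mk (X ^ a) : Qmod a) = 0 :=
      Ideal.Quotient.eq_zero_iff_mem.mpr (Ideal.subset_span rfl)
    have hunit : (mk t) * (mk g) = 1 := by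
      have h1 := congrArg mk hst
      rw [map_add, _root_.map_mul, _root_.map_mul, _root_.map_one, hX0, mul_zero, zero_add] at h1
      exact h1
    have hgu : IsUnit (mk g) := IsUnit.of_mul_eq_one _ (mul_comm (mk t) (mk g) ▸ hunit)
    obtain ⟨ug, hug⟩ := hgu
    refine ⟨ug⁻¹, some b, by simpa using hba, ?_⟩
    have hqmk : (Submodule.Quotient.mk f : Qmod a) = mk f := rfl
    rw [hqmk, hfg, _root_.map_mul, ← hug]
    have hiu : ((↑ug⁻¹ * ↑ug : Qmod a)) = 1 := by simp
    calc (↑ug⁻¹ : Qmod a) * (mk (X ^ b) * ↑ug) = (↑ug⁻¹ * ↑ug) * mk (X ^ b) := by ring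
    _ = mk (X ^ b) := by rw [hiu, one_mul]
    _ = qOf a (some b) := rfl

lemma subsingleton_Qmod_zero : Subsingleton (Qmod 0) := by
  refine Submodule.Quotient.subsingleton_iff.mpr ?_
  rw [pow_zero]
  exact Ideal.span_singleton_one

instance Qmod.finiteDimensional (a : ℕ) : FiniteDimensional ℂ (Qmod a) := by
  rcases Nat.eq_zero_or_pos a with h | h
  · subst h
    have := subsingleton_Qmod_zero
    exact Module.Finite.of_surjective (0 : ℂ →ₗ[ℂ] Qmod 0)
      (fun x => ⟨0, Subsingleton.elim _ _⟩)
  · exact PowerBasis.finite (AdjoinRoot.powerBasis (pow_ne_zero a Polynomial.X_ne_zero))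

lemma finrank_Qmod (a : ℕ) : Module.finrank ℂ (Qmod a) = a := by
  rcases Nat.eq_zero_or_pos a with h | h
  · subst h
    have := subsingleton_Qmod_zero
    exact Module.finrank_zero_of_subsingleton
  · have hne : ((X : Rp) ^ a) ≠ 0 := pow_ne_zero a Polynomial.X_ne_zero
    have := (AdjoinRoot.powerBasis hne).finrank
    simp at this
    exact this

/-- Linear version of `Equiv.piEquivPiSubtypeProd`. -/
def piSplitL {ι : Type} (p : ι → Prop) [DecidablePred p] (β : ι → Type)
    [∀ i, AddCommGroup (β i)] [∀ i, Module Rp (β i)] :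
    (∀ i, β i) ≃ₗ[Rp] (∀ i : {x // p x}, β i) × (∀ i : {x // ¬ p x}, β i) :=
  { Equiv.piEquivPiSubtypeProd p β with
    map_add' := fun _ _ => rfl
    map_smul' := fun _ _ => rfl }

/-- Drop a subsingleton factor of a product. -/
def prodSubsingletonEquiv (A T : Type) [AddCommGroup A] [Module Rp A] [AddCommGroup T]
    [Module Rp T] [Subsingleton T] : (A × T) ≃ₗ[Rp] A :=
  LinearEquiv.ofLinear (LinearMap.fst _ _ _) (LinearMap.prod LinearMap.id 0)
    (LinearMap.ext fun x => rfl)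
    (LinearMap.ext fun x => Prod.ext rfl (Subsingleton.elim _ _))

/-- Index data for the finitely many models. -/
abbrev Data (n : ℕ) : Type := Σ k : Fin (n+1), (Fin k → Fin (n+1)) × (Fin k → Option (Fin n))

instance (n : ℕ) : Finite (Data n) := inferInstance

/-- Realization of a model as a matrix pair of size `n`. -/
def realize (n : ℕ) (d : Data n) : Matrix (Fin n) (Fin n) ℂ × (Fin n → ℂ) :=
  let E : Fin d.1 → ℕ := fun j => (d.2.1 j : ℕ)
  if h : Module.finrank ℂ (ModelSp d.1 E) = n then
    let bB := Module.finBasisOfFinrankEq ℂ _ h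
    (LinearMap.toMatrix bB bB (tEnd (ModelSp d.1 E)),
     bB.equivFun (modelVec d.1 E (fun j => (d.2.2 j).map (fun b => (b : ℕ)))))
  else (0, 0)

lemma pEq_realize (n : ℕ) (d : Data n)
    (h : Module.finrank ℂ (ModelSp d.1 (fun j => (d.2.1 j : ℕ))) = n) :
    PEq (tEnd (ModelSp d.1 (fun j => (d.2.1 j : ℕ))))
      (modelVec d.1 _ (fun j => (d.2.2 j).map (fun b => (b : ℕ))))
      (mulVecLin (realize n d).1) (realize n d).2 := by
  rw [realize]
  simp only [h, dif_pos]
  set E : Fin d.1 → ℕ := fun j => (d.2.1 j : ℕ)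
  set bB := Module.finBasisOfFinrankEq ℂ (ModelSp d.1 E) h
  refine ⟨bB.equivFun, fun x => ?_, rfl⟩
  have := LinearMap.toMatrix_mulVec_repr bB bB (tEnd (ModelSp d.1 E)) x
  simp only [Basis.equivFun_apply]
  rw [← this]
  rfl

set_option maxHeartbeats 1000000 in
lemma main (n : ℕ) (Xm : Matrix (Fin n) (Fin n) ℂ) (hX : IsNilpotent Xm) (v : Fin n → ℂ) :
    ∃ d : Data n, PEq (mulVecLin Xm) v (mulVecLin (realize n d).1) (realize n d).2 := by
  classical
  obtain ⟨k₀, hk₀⟩ := hX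
  set φ : (Fin n → ℂ) →ₗ[ℂ] (Fin n → ℂ) := mulVecLin Xm with hφ
  have hφpow : ∀ m, φ ^ m = mulVecLin (Xm ^ m) := by
    intro m
    induction m with
    | zero => simp [Matrix.mulVecLin_one]; rfl
    | succ m ih => rw [pow_succ, pow_succ, Matrix.mulVecLin_mul, ih]; rfl
  set k := k₀ + 1 with hkdef
  have hXk : Xm ^ k = 0 := by rw [pow_succ, hk₀, zero_mul]
  have hk : φ ^ k = 0 := by rw [hφpow, hXk]; simp
  have hkill : ∀ m : Module.AEval' φ, ((X : Rp) ^ k) • m = 0 := by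
    intro m
    apply (Module.AEval'.of φ).symm.injective
    rw [Module.AEval.of_symm_smul]
    simp [hk]
  have htors : Module.IsTorsion Rp (Module.AEval' φ) := fun m =>
    ⟨⟨(X : Rp) ^ k, mem_nonZeroDivisors_of_ne_zero (pow_ne_zero _ Polynomial.X_ne_zero)⟩, hkill m⟩
  obtain ⟨ι, hι, p, hp, e, ⟨L⟩⟩ := Module.equiv_directSum_of_isTorsion htors
  have hspan : ∀ i, (Rp ∙ (p i ^ e i)) = Ideal.span {((X : Rp) ^ (e i))} := by
    intro i
    rcases Nat.eq_zero_or_pos (e i) with h0 | hpos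
    · rw [h0, pow_zero, pow_zero]
    · have hkill' : ∀ y : DirectSum ι fun i => Rp ⧸ (Rp ∙ (p i ^ e i)), ((X : Rp) ^ k) • y = 0 := by
        intro y
        have hy : y = L (L.symm y) := (L.apply_symm_apply y).symm
        rw [hy, ← _root_.map_smul, hkill, map_zero]
      have h2 := congrArg (fun z => z i)
        (hkill' (DirectSum.of (fun i => Rp ⧸ (Rp ∙ (p i ^ e i))) i (Submodule.Quotient.mk 1)))
      simp only [DirectSum.smul_apply, DirectSum.of_eq_same, DFinsupp.zero_apply] at h2
      rw [← Submodule.Quotient.mk_smul, smul_eq_mul, mul_one,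
        Submodule.Quotient.mk_eq_zero] at h2
      have hdvd : p i ^ e i ∣ (X : Rp) ^ k := Ideal.mem_span_singleton.mp h2
      have hprime : Prime (p i) := (hp i).prime
      have hpX : p i ∣ (X : Rp) :=
        hprime.dvd_of_dvd_pow (dvd_trans (dvd_pow_self _ hpos.ne') hdvd)
      have hassoc : Associated (p i) (X : Rp) :=
        (hp i).associated_of_dvd Polynomial.irreducible_X hpX
      exact Ideal.span_singleton_eq_span_singleton.mpr (hassoc.pow_pow)
  let L2 : (DirectSum ι fun i => Rp ⧸ (Rp ∙ (p i ^ e i))) ≃ₗ[Rp]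
      (DirectSum ι fun i => Qmod (e i)) :=
    DFinsupp.mapRange.linearEquiv (fun i => Submodule.quotEquivOfEq _ _ (hspan i))
  let L3 : (DirectSum ι fun i => Qmod (e i)) ≃ₗ[Rp] ∀ i, Qmod (e i) :=
    DirectSum.linearEquivFunOnFintype Rp ι (fun i => Qmod (e i))
  let pr : ι → Prop := fun i => e i ≠ 0
  let L4 := piSplitL pr (fun i => Qmod (e i))
  have hsub : Subsingleton (∀ i : {x // ¬ pr x}, Qmod (e i.1)) := by
    have hss : ∀ i : {x // ¬ pr x}, Subsingleton (Qmod (e i.1)) := by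
      intro i
      have h0 : e i.1 = 0 := not_not.mp i.2
      rw [h0]
      exact subsingleton_Qmod_zero
    exact ⟨fun a b => funext fun i => @Subsingleton.elim _ (hss i) _ _⟩
  haveI := hsub
  let L5 := prodSubsingletonEquiv (∀ i : {x // pr x}, Qmod (e i.1))
    (∀ i : {x // ¬ pr x}, Qmod (e i.1))
  let c := Fintype.card {x // pr x}
  let eqv : Fin c ≃ {x // pr x} := (Fintype.equivFin _).symm
  let E : Fin c → ℕ := fun j => e (eqv j)
  let L6 : (∀ i : {x // pr x}, Qmod (e i.1)) ≃ₗ[Rp] ModelSp c E :=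
    (LinearEquiv.piCongrLeft Rp (fun i : {x // pr x} => Qmod (e i.1)) eqv).symm
  let Ltot : Module.AEval' φ ≃ₗ[Rp] ModelSp c E :=
    L ≪≫ₗ L2 ≪≫ₗ L3 ≪≫ₗ L4 ≪≫ₗ L5 ≪≫ₗ L6
  set w := Ltot (Module.AEval'.of φ v) with hw
  choose u bo hbo hnorm using fun j => exists_unit_norm (E j) (w j)
  let Ψ : ModelSp c E ≃ₗ[Rp] ModelSp c E := LinearEquiv.piCongrRight (fun j => unitMul (u j))
  have hΨw : Ψ w = modelVec c E bo := by
    funext j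
    show (unitMul (u j)) (w j) = qOf (E j) (bo j)
    exact hnorm j
  have hfr : Module.finrank ℂ (ModelSp c E) = n := by
    have e1 : Module.finrank ℂ (Module.AEval' φ) = n := by
      rw [← (Module.AEval'.of φ).finrank_eq]
      simp [Module.finrank_fin_fun]
    rw [← e1]
    exact ((Ltot.restrictScalars ℂ).finrank_eq).symm
  have hsum : ∑ j, E j = n := by
    rw [← hfr, Module.finrank_pi_fintype ℂ]
    exact (Finset.sum_congr rfl fun j _ => (finrank_Qmod (E j))).symm
  have hE1 : ∀ j, 1 ≤ E j := fun j => Nat.one_le_iff_ne_zero.mpr (eqv j).2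
  have hEn : ∀ j, E j ≤ n := by
    intro j
    rw [← hsum]
    exact Finset.single_le_sum (f := E) (fun _ _ => Nat.zero_le _) (Finset.mem_univ j)
  have hcn : c ≤ n := by
    calc c = ∑ _j : Fin c, 1 := by simp
    _ ≤ ∑ j, E j := Finset.sum_le_sum (fun j _ => hE1 j)
    _ = n := hsum
  let B' : Fin c → Option (Fin n) := fun j => Option.pmap (fun b hb => (⟨b, hb⟩ : Fin n)) (bo j)
      (fun b hb => lt_of_lt_of_le (hbo j b hb) (hEn j))
  have hB' : (fun j => (B' j).map (fun b => (b : ℕ))) = bo := by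
    funext j
    cases hbj : bo j <;> simp [B', hbj]
  let d : Data n := ⟨⟨c, Nat.lt_succ_of_le hcn⟩,
    fun j => ⟨E j, Nat.lt_succ_of_le (hEn j)⟩, B'⟩
  refine ⟨d, ?_⟩
  have h1 : PEq φ v (tEnd (Module.AEval' φ)) (Module.AEval'.of φ v) :=
    ⟨Module.AEval'.of φ, fun x => (Module.AEval'.X_smul_of φ x).symm, rfl⟩
  have h2 : PEq (tEnd (Module.AEval' φ)) (Module.AEval'.of φ v) (tEnd (ModelSp c E)) w :=
    pEq_of_linearEquiv Ltot _
  have h3 : PEq (tEnd (ModelSp c E)) w (tEnd (ModelSp c E)) (modelVec c E bo) := by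
    have h := pEq_of_linearEquiv Ψ w
    rwa [hΨw] at h
  have h4 := pEq_realize n d hfr
  rw [hB'] at h4
  exact ((h1.trans h2).trans h3).trans h4

lemma orbit_eq_of_pEq (n : ℕ) (A B : Matrix (Fin n) (Fin n) ℂ) (v w : Fin n → ℂ)
    (h : PEq (mulVecLin A) v (mulVecLin B) w) :
    {p : Matrix (Fin n) (Fin n) ℂ × (Fin n → ℂ) | ∃ g : GL (Fin n) ℂ,
      p = ((↑g : Matrix (Fin n) (Fin n) ℂ) * A * (↑(g⁻¹) : Matrix (Fin n) (Fin n) ℂ),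
           (↑g : Matrix (Fin n) (Fin n) ℂ) *ᵥ v)} =
    {p : Matrix (Fin n) (Fin n) ℂ × (Fin n → ℂ) | ∃ g : GL (Fin n) ℂ,
      p = ((↑g : Matrix (Fin n) (Fin n) ℂ) * B * (↑(g⁻¹) : Matrix (Fin n) (Fin n) ℂ),
           (↑g : Matrix (Fin n) (Fin n) ℂ) *ᵥ w)} := by
  obtain ⟨e, he, hv⟩ := h
  set Gm : Matrix (Fin n) (Fin n) ℂ := LinearMap.toMatrix' (e : (Fin n → ℂ) →ₗ[ℂ] (Fin n → ℂ))
    with hGmdef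
  set Gm' : Matrix (Fin n) (Fin n) ℂ :=
    LinearMap.toMatrix' (e.symm : (Fin n → ℂ) →ₗ[ℂ] (Fin n → ℂ)) with hGm'def
  have hGmx : ∀ x, Gm *ᵥ x = e x := by
    intro x
    have h1 := Matrix.toLin'_toMatrix' (e : (Fin n → ℂ) →ₗ[ℂ] (Fin n → ℂ))
    calc Gm *ᵥ x = Matrix.toLin' Gm x := (Matrix.toLin'_apply _ _).symm
    _ = e x := by rw [hGmdef, h1]; rfl
  have hGmx' : ∀ x, Gm' *ᵥ x = e.symm x := by
    intro x
    have h1 := Matrix.toLin'_toMatrix' (e.symm : (Fin n → ℂ) →ₗ[ℂ] (Fin n → ℂ))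
    calc Gm' *ᵥ x = Matrix.toLin' Gm' x := (Matrix.toLin'_apply _ _).symm
    _ = e.symm x := by rw [hGm'def, h1]; rfl
  have hGG' : Gm * Gm' = 1 := by
    rw [hGmdef, hGm'def, ← LinearMap.toMatrix'_comp]
    have h2 : ((e : (Fin n → ℂ) →ₗ[ℂ] (Fin n → ℂ)) ∘ₗ
        (e.symm : (Fin n → ℂ) →ₗ[ℂ] (Fin n → ℂ))) = LinearMap.id := by
      ext x
      simp
    rw [h2, LinearMap.toMatrix'_id]
  have hG'G : Gm' * Gm = 1 := by
    rw [hGmdef, hGm'def, ← LinearMap.toMatrix'_comp]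
    have h2 : ((e.symm : (Fin n → ℂ) →ₗ[ℂ] (Fin n → ℂ)) ∘ₗ
        (e : (Fin n → ℂ) →ₗ[ℂ] (Fin n → ℂ))) = LinearMap.id := by
      ext x
      simp
    rw [h2, LinearMap.toMatrix'_id]
  let G : GL (Fin n) ℂ := ⟨Gm, Gm', hGG', hG'G⟩
  have hBA : B * Gm = Gm * A := by
    have hx : ∀ x, (B * Gm) *ᵥ x = (Gm * A) *ᵥ x := by
      intro x
      rw [← Matrix.mulVec_mulVec, ← Matrix.mulVec_mulVec, hGmx, hGmx]
      have := he x
      rw [Matrix.mulVecLin_apply, Matrix.mulVecLin_apply] at this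
      exact this.symm
    apply Matrix.toLin'.injective
    apply LinearMap.ext
    intro x
    rw [Matrix.toLin'_apply, Matrix.toLin'_apply]
    exact hx x
  have hGw : Gm *ᵥ v = w := by rw [hGmx, hv]
  -- key conjugation identities
  have hmid : Gm' * B * Gm = A := by
    rw [Matrix.mul_assoc, hBA, ← Matrix.mul_assoc, hG'G, Matrix.one_mul]
  have hmid2 : Gm * A * Gm' = B := by
    rw [← hBA, Matrix.mul_assoc, hGG', Matrix.mul_one]
  have hsymm : e.symm w = v := by rw [← hv, LinearEquiv.symm_apply_apply]
  have hGinv : (↑(G⁻¹) : Matrix (Fin n) (Fin n) ℂ) = Gm' := rfl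
  have hGval : (↑G : Matrix (Fin n) (Fin n) ℂ) = Gm := rfl
  ext q
  constructor
  · rintro ⟨g, rfl⟩
    refine ⟨g * G⁻¹, ?_⟩
    have hval : (↑(g * G⁻¹) : Matrix (Fin n) (Fin n) ℂ)
        = (↑g : Matrix (Fin n) (Fin n) ℂ) * Gm' := by
      rw [Units.val_mul, hGinv]
    have hinv : (↑((g * G⁻¹)⁻¹) : Matrix (Fin n) (Fin n) ℂ)
        = Gm * (↑(g⁻¹) : Matrix (Fin n) (Fin n) ℂ) := by
      rw [_root_.mul_inv_rev, inv_inv, Units.val_mul, hGval]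
    have h1 : (↑(g * G⁻¹) : Matrix (Fin n) (Fin n) ℂ) * B
          * (↑((g * G⁻¹)⁻¹) : Matrix (Fin n) (Fin n) ℂ)
        = (↑g : Matrix (Fin n) (Fin n) ℂ) * A * (↑(g⁻¹) : Matrix (Fin n) (Fin n) ℂ) := by
      rw [hval, hinv]
      have hexp : (↑g : Matrix (Fin n) (Fin n) ℂ) * Gm' * B
            * (Gm * (↑(g⁻¹) : Matrix (Fin n) (Fin n) ℂ))
          = (↑g : Matrix (Fin n) (Fin n) ℂ) * (Gm' * B * Gm)
            * (↑(g⁻¹) : Matrix (Fin n) (Fin n) ℂ) := by noncomm_ring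
      rw [hexp, hmid]
    have h2 : (↑(g * G⁻¹) : Matrix (Fin n) (Fin n) ℂ) *ᵥ w
        = (↑g : Matrix (Fin n) (Fin n) ℂ) *ᵥ v := by
      rw [hval, ← Matrix.mulVec_mulVec, hGmx', hsymm]
    rw [h1, h2]
  · rintro ⟨g, rfl⟩
    refine ⟨g * G, ?_⟩
    have hval : (↑(g * G) : Matrix (Fin n) (Fin n) ℂ)
        = (↑g : Matrix (Fin n) (Fin n) ℂ) * Gm := by
      rw [Units.val_mul, hGval]
    have hinv : (↑((g * G)⁻¹) : Matrix (Fin n) (Fin n) ℂ)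
        = Gm' * (↑(g⁻¹) : Matrix (Fin n) (Fin n) ℂ) := by
      rw [_root_.mul_inv_rev, Units.val_mul, hGinv]
    have h1 : (↑(g * G) : Matrix (Fin n) (Fin n) ℂ) * A
          * (↑((g * G)⁻¹) : Matrix (Fin n) (Fin n) ℂ)
        = (↑g : Matrix (Fin n) (Fin n) ℂ) * B * (↑(g⁻¹) : Matrix (Fin n) (Fin n) ℂ) := by
      rw [hval, hinv]
      have hexp : (↑g : Matrix (Fin n) (Fin n) ℂ) * Gm * A
            * (Gm' * (↑(g⁻¹) : Matrix (Fin n) (Fin n) ℂ))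
          = (↑g : Matrix (Fin n) (Fin n) ℂ) * (Gm * A * Gm')
            * (↑(g⁻¹) : Matrix (Fin n) (Fin n) ℂ) := by noncomm_ring
      rw [hexp, hmid2]
    have h2 : (↑(g * G) : Matrix (Fin n) (Fin n) ℂ) *ᵥ v
        = (↑g : Matrix (Fin n) (Fin n) ℂ) *ᵥ w := by
      rw [hval, ← Matrix.mulVec_mulVec, hGmx, hv]
    rw [h1, h2]

end

end Stmt4Aux

/-- `N × ℂ^n`, with `N` the nilpotent cone, is a finite union of orbits of the
diagonal `GL_n(ℂ)`-action `g·(X,v) = (gXg⁻¹, gv)`. -/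
theorem stmt4 (n : ℕ) :
    {O : Set (Matrix (Fin n) (Fin n) ℂ × (Fin n → ℂ)) |
      ∃ X : Matrix (Fin n) (Fin n) ℂ, IsNilpotent X ∧ ∃ v : Fin n → ℂ,
        O = {p | ∃ g : GL (Fin n) ℂ,
          p = ((↑g : Matrix (Fin n) (Fin n) ℂ) * X * (↑(g⁻¹) : Matrix (Fin n) (Fin n) ℂ),
               (↑g : Matrix (Fin n) (Fin n) ℂ) *ᵥ v)}}.Finite := by
  classical
  have hsub : {O : Set (Matrix (Fin n) (Fin n) ℂ × (Fin n → ℂ)) |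
      ∃ X : Matrix (Fin n) (Fin n) ℂ, IsNilpotent X ∧ ∃ v : Fin n → ℂ,
        O = {p | ∃ g : GL (Fin n) ℂ,
          p = ((↑g : Matrix (Fin n) (Fin n) ℂ) * X * (↑(g⁻¹) : Matrix (Fin n) (Fin n) ℂ),
               (↑g : Matrix (Fin n) (Fin n) ℂ) *ᵥ v)}} ⊆
      Set.range (fun d : Stmt4Aux.Data n =>
        {p : Matrix (Fin n) (Fin n) ℂ × (Fin n → ℂ) | ∃ g : GL (Fin n) ℂ,
          p = ((↑g : Matrix (Fin n) (Fin n) ℂ) * (Stmt4Aux.realize n d).1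
                * (↑(g⁻¹) : Matrix (Fin n) (Fin n) ℂ),
               (↑g : Matrix (Fin n) (Fin n) ℂ) *ᵥ (Stmt4Aux.realize n d).2)}) := by
    rintro O ⟨X, hX, v, rfl⟩
    obtain ⟨d, hd⟩ := Stmt4Aux.main n X hX v
    exact ⟨d, (Stmt4Aux.orbit_eq_of_pEq n X (Stmt4Aux.realize n d).1 v
      (Stmt4Aux.realize n d).2 hd).symm⟩
  exact Set.Finite.subset (Set.finite_range _) hsub
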